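/- Let f : ℕ → ℂ and let z ∈ ℂ be such that the series ∑_{n≥0} |f_n| |z|^n converges. Then ∑_{n≥0} f_n z^n / (2^n · n!) = (1/(2π)) ∫_{-π}^{π} F(z e^{-i t}) e^{(1/2) e^{i t}} dt, where F(w) = ∑_{n≥0} f_n w^n. -/

import Mathlib

open MeasureTheory intervalIntegral

set_option maxHeartbeats 2000000 in
/-- If `∑ ‖f n‖ ‖z‖^n` converges, then
`∑_{n≥0} f_n z^n / (2^n n!) = (1/(2π)) ∫_{-π}^{π} F(z e^{-it}) e^{(1/2) e^{it}} dt`,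
where `F(w) = ∑_{n≥0} f_n w^n`. -/
theorem double_factorial_integral_formula (f : ℕ → ℂ) (z : ℂ)
    (hsum : Summable (fun n : ℕ => ‖f n‖ * ‖z‖ ^ n)) :
    ∑' n : ℕ, f n * z ^ n / ((2 : ℂ) ^ n * n.factorial) =
      ((2 * Real.pi : ℝ) : ℂ)⁻¹ *
        ∫ t in (-Real.pi)..Real.pi,
          (∑' n : ℕ, f n * (z * Complex.exp (-(Complex.I * (t : ℂ)))) ^ n) *
            Complex.exp ((1 / 2 : ℂ) * Complex.exp (Complex.I * (t : ℂ))) := by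
  have hπ := Real.pi_pos
  have hle : -Real.pi ≤ Real.pi := by linarith
  have habs1 : ∀ t : ℝ, ‖Complex.exp (Complex.I * (t : ℂ))‖ = 1 := fun t => by
    rw [mul_comm, Complex.norm_exp_ofReal_mul_I]
  have habs2 : ∀ t : ℝ, ‖Complex.exp (-(Complex.I * (t : ℂ)))‖ = 1 := fun t => by
    rw [Complex.exp_neg, norm_inv, habs1 t, inv_one]
  set G : ℕ × ℕ → ℝ → ℂ := fun p t =>
    (f p.1 * z ^ p.1 * Complex.exp (-(Complex.I * (t : ℂ))) ^ p.1) *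
      (((1/2 : ℂ) * Complex.exp (Complex.I * (t : ℂ))) ^ p.2 / (p.2.factorial : ℂ)) with hG
  -- pointwise identity
  have key : ∀ t : ℝ,
      (∑' n : ℕ, f n * (z * Complex.exp (-(Complex.I * (t : ℂ)))) ^ n) *
        Complex.exp ((1 / 2 : ℂ) * Complex.exp (Complex.I * (t : ℂ)))
      = ∑' p : ℕ × ℕ, G p t := by
    intro t
    have hA : Summable fun n : ℕ =>
        ‖f n * z ^ n * Complex.exp (-(Complex.I * (t : ℂ))) ^ n‖ := by
      refine hsum.congr fun n => ?_
      rw [norm_mul, norm_mul, norm_pow, norm_pow, habs2 t, one_pow, mul_one]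
    have hB : Summable fun m : ℕ =>
        ‖((1/2 : ℂ) * Complex.exp (Complex.I * (t : ℂ))) ^ m / (m.factorial : ℂ)‖ := by
      refine (NormedSpace.expSeries_div_summable
        ‖(1/2 : ℂ) * Complex.exp (Complex.I * (t : ℂ))‖).congr fun m => ?_
      rw [norm_div, norm_pow, Complex.norm_natCast]
    have h1 : (∑' n : ℕ, f n * (z * Complex.exp (-(Complex.I * (t : ℂ)))) ^ n)
        = ∑' n : ℕ, f n * z ^ n * Complex.exp (-(Complex.I * (t : ℂ))) ^ n := by
      refine tsum_congr fun n => ?_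
      rw [mul_pow]; ring
    have h2 : Complex.exp ((1 / 2 : ℂ) * Complex.exp (Complex.I * (t : ℂ)))
        = ∑' m : ℕ, ((1/2 : ℂ) * Complex.exp (Complex.I * (t : ℂ))) ^ m / (m.factorial : ℂ) := by
      rw [Complex.exp_eq_exp_ℂ, NormedSpace.exp_eq_tsum_div]
    rw [h1, h2]
    exact tsum_mul_tsum_of_summable_norm hA hB
  -- measurability
  have hmeas : ∀ p : ℕ × ℕ, AEStronglyMeasurable (G p)
      (volume.restrict (Set.Ioc (-Real.pi) Real.pi)) := by
    intro p
    apply Continuous.aestronglyMeasurable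
    have h1 : Continuous fun t : ℝ => Complex.exp (-(Complex.I * (t : ℂ))) :=
      Complex.continuous_exp.comp (continuous_const.mul Complex.continuous_ofReal).neg
    have h2 : Continuous fun t : ℝ => Complex.exp (Complex.I * (t : ℂ)) :=
      Complex.continuous_exp.comp (continuous_const.mul Complex.continuous_ofReal)
    exact (continuous_const.mul (h1.pow p.1)).mul
      (((continuous_const.mul h2).pow p.2).div_const _)
  -- the constant norm
  set c : ℕ × ℕ → ℝ := fun p => (‖f p.1‖ * ‖z‖ ^ p.1) * ((1/2 : ℝ) ^ p.2 / (p.2.factorial : ℝ))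
    with hc
  have hnorm : ∀ (p : ℕ × ℕ) (t : ℝ), ‖G p t‖ = c p := by
    intro p t
    rw [hG, hc]
    simp only [norm_mul, norm_div, norm_pow, norm_mul, habs1 t, habs2 t, one_pow, mul_one,
      Complex.norm_natCast]
    norm_num
  have hcnonneg : ∀ p : ℕ × ℕ, 0 ≤ c p := fun p => by positivity
  have hcsummable : Summable c := by
    rw [hc]
    exact Summable.mul_of_nonneg hsum
      (NormedSpace.expSeries_div_summable (1/2 : ℝ))
      (Pi.le_def.mpr fun n => by positivity) (Pi.le_def.mpr fun m => by positivity)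
  -- lintegral bound
  have hlint : ∑' p : ℕ × ℕ,
      ∫⁻ t, (‖G p t‖₊ : ENNReal) ∂(volume.restrict (Set.Ioc (-Real.pi) Real.pi)) ≠ ⊤ := by
    have heq : ∀ p : ℕ × ℕ,
        ∫⁻ t, (‖G p t‖₊ : ENNReal) ∂(volume.restrict (Set.Ioc (-Real.pi) Real.pi))
        = ENNReal.ofReal (c p) * ENNReal.ofReal (2 * Real.pi) := by
      intro p
      have hcc : ∀ t : ℝ, (‖G p t‖₊ : ENNReal) = ENNReal.ofReal (c p) := fun t => by
        rw [← hnorm p t, ← coe_nnnorm, ENNReal.ofReal_coe_nnreal]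
      simp only [hcc]
      rw [lintegral_const, Measure.restrict_apply MeasurableSet.univ, Set.univ_inter,
        Real.volume_Ioc]
      congr 1
      congr 1
      ring
    simp only [heq]
    rw [ENNReal.tsum_mul_right]
    refine ENNReal.mul_ne_top ?_ ENNReal.ofReal_ne_top
    rw [← ENNReal.ofReal_tsum_of_nonneg hcnonneg hcsummable]
    exact ENNReal.ofReal_ne_top
  -- orthogonality integral
  have hint : ∀ k : ℤ, (∫ t in (-Real.pi)..Real.pi, Complex.exp ((k : ℂ) * (Complex.I * (t : ℂ))))
      = if k = 0 then ((2 * Real.pi : ℝ) : ℂ) else 0 := by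
    intro k
    rcases eq_or_ne k 0 with hk | hk
    · rw [if_pos hk]
      simp only [hk, Int.cast_zero, zero_mul, Complex.exp_zero]
      rw [intervalIntegral.integral_const]
      push_cast
      rw [Complex.real_smul]
      push_cast
      ring
    · rw [if_neg hk]
      have hc2 : (k : ℂ) * Complex.I ≠ 0 := by
        simp [Complex.I_ne_zero, Int.cast_ne_zero.mpr hk]
      have harr : ∀ t : ℝ, (k : ℂ) * (Complex.I * (t : ℂ)) = ((k : ℂ) * Complex.I) * (t : ℂ) :=
        fun t => by ring
      simp_rw [harr]
      rw [integral_exp_mul_complex hc2]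
      have e1 : (k : ℂ) * Complex.I * ((Real.pi : ℝ) : ℂ)
          = (k : ℂ) * ((Real.pi : ℂ) * Complex.I) := by ring
      have e2 : (k : ℂ) * Complex.I * (((-Real.pi : ℝ)) : ℂ)
          = ((-k : ℤ) : ℂ) * ((Real.pi : ℂ) * Complex.I) := by push_cast; ring
      rw [e1, e2, Complex.exp_int_mul, Complex.exp_int_mul, Complex.exp_pi_mul_I]
      have hminus : ((-1 : ℂ)) ^ (-k) = (-1 : ℂ) ^ k := by
        rw [zpow_neg]
        refine inv_eq_of_mul_eq_one_right ?_
        rw [← mul_zpow]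
        norm_num
      rw [hminus, sub_self, zero_div]
  -- each term's integral
  have hGint : ∀ p : ℕ × ℕ,
      (∫ t in Set.Ioc (-Real.pi) Real.pi, G p t)
      = if p.1 = p.2 then
          ((2 * Real.pi : ℝ) : ℂ) * (f p.1 * z ^ p.1 / ((2 : ℂ) ^ p.1 * p.1.factorial)) else 0 := by
    rintro ⟨n, m⟩
    have hx := Complex.exp_ne_zero
    have hGeq : ∀ t : ℝ, G (n, m) t
        = (f n * z ^ n * ((1/2 : ℂ) ^ m / (m.factorial : ℂ))) *
            Complex.exp ((((m : ℤ) - (n : ℤ) : ℤ) : ℂ) * (Complex.I * (t : ℂ))) := by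
      intro t
      have hexp : Complex.exp (-(Complex.I * (t : ℂ))) ^ n *
          Complex.exp (Complex.I * (t : ℂ)) ^ m
          = Complex.exp ((((m : ℤ) - (n : ℤ) : ℤ) : ℂ) * (Complex.I * (t : ℂ))) := by
        rw [Complex.exp_int_mul, Complex.exp_neg, inv_pow,
          ← zpow_natCast (Complex.exp (Complex.I * (t : ℂ))) n,
          ← zpow_natCast (Complex.exp (Complex.I * (t : ℂ))) m,
          ← zpow_neg, ← zpow_add₀ (Complex.exp_ne_zero _)]
        congr 1
        ring
      rw [hG]
      simp only
      rw [mul_pow, ← hexp]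
      ring
    rw [← intervalIntegral.integral_of_le hle,
      intervalIntegral.integral_congr (g := fun t =>
        (f n * z ^ n * ((1/2 : ℂ) ^ m / (m.factorial : ℂ))) *
          Complex.exp ((((m : ℤ) - (n : ℤ) : ℤ) : ℂ) * (Complex.I * (t : ℂ))))
        (fun t _ => hGeq t),
      intervalIntegral.integral_const_mul, hint ((m : ℤ) - n)]
    by_cases hnm : n = m
    · subst hnm
      rw [if_pos (sub_self (n : ℤ)), if_pos rfl]
      have h2 : ((2 : ℂ) ^ n : ℂ) ≠ 0 := pow_ne_zero _ two_ne_zero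
      have hf : ((n.factorial : ℂ)) ≠ 0 := Nat.cast_ne_zero.mpr n.factorial_ne_zero
      field_simp
      rw [one_div, inv_pow, mul_assoc, inv_mul_cancel₀ h2, mul_one]
    · rw [if_neg (by simp [sub_eq_zero]; exact fun h => hnm (by exact_mod_cast h.symm)),
        if_neg (by simp [hnm]), mul_zero]
  -- assemble
  have hdiag : (∑' p : ℕ × ℕ, (if p.1 = p.2 then
        ((2 * Real.pi : ℝ) : ℂ) * (f p.1 * z ^ p.1 / ((2 : ℂ) ^ p.1 * p.1.factorial)) else 0))
      = ((2 * Real.pi : ℝ) : ℂ) * ∑' n : ℕ, f n * z ^ n / ((2 : ℂ) ^ n * n.factorial) := by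
    rw [← tsum_mul_left]
    refine (Function.Injective.tsum_eq (g := fun n : ℕ => ((n, n) : ℕ × ℕ))
      (fun a b h => (Prod.ext_iff.mp h).1) ?_).symm.trans ?_
    · intro p hp
      rcases p with ⟨n, m⟩
      by_cases hnm : n = m
      · exact ⟨n, by simp [hnm]⟩
      · simp [hnm] at hp
    · exact tsum_congr fun n => by simp
  have h2π : ((2 * Real.pi : ℝ) : ℂ) ≠ 0 := by
    simp only [ne_eq, Complex.ofReal_eq_zero]
    positivity
  rw [intervalIntegral.integral_congr (g := fun t => ∑' p : ℕ × ℕ, G p t) (fun t _ => key t),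
    intervalIntegral.integral_of_le hle, MeasureTheory.integral_tsum hmeas hlint,
    tsum_congr hGint, hdiag, ← mul_assoc, inv_mul_cancel₀ h2π, one_mul]
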